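/- Let x, y, z be real numbers and let σ = ρ(x,y,z) ⊗ ρ(x,y,z) be the 4×4 Kronecker product matrix. Then the 2×2 matrix formed from σ's entries at the even-parity basis indices, namely [[σ_{00,00}, σ_{00,11}], [σ_{11,00}, σ_{11,11}]], equals ((1+z²)/2) · ρ( (x²−y²)/(1+z²), 2xy/(1+z²), 2z/(1+z²) ). In particular, a successful postselected parity check maps the Bloch vector (x,y,z) to ((x²−y²)/(1+z²), 2xy/(1+z²), 2z/(1+z²)). -/

import Mathlib

open Matrix Kronecker

noncomputable def PX : Matrix (Fin 2) (Fin 2) ℂ := !![0, 1; 1, 0]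
noncomputable def PY : Matrix (Fin 2) (Fin 2) ℂ := !![0, -Complex.I; Complex.I, 0]
noncomputable def PZ : Matrix (Fin 2) (Fin 2) ℂ := !![1, 0; 0, -1]

/-- The Bloch-sphere state `ρ(x,y,z) = (1/2)(I + xX + yY + zZ)`. -/
noncomputable def rho (x y z : ℝ) : Matrix (Fin 2) (Fin 2) ℂ :=
  (1 / 2 : ℂ) • (1 + (x : ℂ) • PX + (y : ℂ) • PY + (z : ℂ) • PZ)

/-- A successful postselected parity check on two copies of `ρ(x,y,z)` extracts the
even-parity `2×2` submatrix, which equals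
`((1+z²)/2) · ρ((x²−y²)/(1+z²), 2xy/(1+z²), 2z/(1+z²))`. -/
lemma rho_eq (x y z : ℝ) :
    rho x y z = !![((1:ℂ) + z)/2, ((x:ℂ) - Complex.I * y)/2; ((x:ℂ) + Complex.I * y)/2, ((1:ℂ) - z)/2] := by
  unfold rho PX PY PZ
  ext i j
  fin_cases i <;> fin_cases j <;>
    simp [Matrix.one_apply] <;> ring

set_option maxHeartbeats 1000000 in
theorem stmt_2 (x y z : ℝ) :
    let σ : Matrix (Fin 2 × Fin 2) (Fin 2 × Fin 2) ℂ := rho x y z ⊗ₖ rho x y z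
    !![σ (0, 0) (0, 0), σ (0, 0) (1, 1); σ (1, 1) (0, 0), σ (1, 1) (1, 1)] =
      (((1 + z ^ 2) / 2 : ℝ) : ℂ) •
        rho ((x ^ 2 - y ^ 2) / (1 + z ^ 2)) (2 * x * y / (1 + z ^ 2))
          (2 * z / (1 + z ^ 2)) := by
  have hz : (1 : ℂ) + (z:ℂ)^2 ≠ 0 := by
    intro h
    have : (1 + z^2 : ℝ) = 0 := by exact_mod_cast h
    nlinarith [sq_nonneg z]
  intro σ
  have hσ : ∀ a b c d, σ (a, b) (c, d) = rho x y z a c * rho x y z b d := by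
    intro a b c d; rfl
  ext i j
  fin_cases i <;> fin_cases j <;>
    · simp only [hσ, rho_eq]
      norm_num [Matrix.smul_apply]
      field_simp
      try ring
      try (rw [Complex.I_sq]; ring)
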